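/- For any p-string w and p-symbol c ∈ Σp, the p-encodings ⟨w⟩ and ⟨cw⟩[2..] differ if and only if c occurs in w; moreover, when c occurs in w, letting h be the leftmost occurrence of c in w, the two strings agree at all positions except h, where ⟨w⟩[h] = ∞ and ⟨cw⟩[h+1] = h. -/

import Mathlib

/-- Symbols of a parameterized string: static symbols `s a` (from Σs) and
parameter symbols `p a` (from Σp). -/
inductive PSym where
  | s : ℕ → PSym
  | p : ℕ → PSym
deriving DecidableEq

/-- Symbols of a p-encoded string: static symbols, finite distances, and ∞. -/
inductive Enc where
  | s : ℕ → Enc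
  | fin : ℕ → Enc
  | inf : Enc
deriving DecidableEq

/-- Order embedding: static symbols < natural numbers < ∞. -/
def Enc.toPair : Enc → ℕ ×ₗ ℕ
  | .s a => toLex (0, a)
  | .fin d => toLex (1, d)
  | .inf => toLex (2, 0)

instance : LinearOrder Enc :=
  LinearOrder.lift' Enc.toPair (by
    rintro (a | a | _) (b | b | _) h <;>
      simp_all [Enc.toPair, toLex_inj, Prod.ext_iff])

/-- Largest position `j < i` (0-based) carrying the same symbol as position `i`. -/
def prevOcc (w : List PSym) (i : ℕ) : Option ℕ :=
  ((List.range i).filter (fun j => w[j]? = w[i]?)).max?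

/-- The p-encoding of position `i` (0-based) of `w`. -/
def pencSym (w : List PSym) (i : ℕ) : Enc :=
  match w[i]? with
  | some (PSym.s a) => Enc.s a
  | some (PSym.p _) =>
    match prevOcc w i with
    | some j => Enc.fin (i - j)
    | none => Enc.inf
  | none => Enc.inf

/-- The p-encoding ⟨w⟩ of a p-string `w`. -/
def penc (w : List PSym) : List Enc :=
  (List.range w.length).map (pencSym w)

/-- Lexicographic (strict) order on p-encoded strings. -/
def lexLt (x y : List Enc) : Prop := List.Lex (· < ·) x y

def lexLe (x y : List Enc) : Prop := lexLt x y ∨ x = y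

/-- Length of the longest common prefix. -/
def lcp {α : Type*} [DecidableEq α] : List α → List α → ℕ
  | a :: x, b :: y => if a = b then lcp x y + 1 else 0
  | _, _ => 0

/-- Number of ∞'s in the longest common prefix of two p-encoded strings. -/
def lcpInf (x y : List Enc) : ℕ := (x.take (lcp x y)).count Enc.inf

/-- Number of distinct p-symbols occurring in `w` (denoted |w|_p). -/
def distinctP (w : List PSym) : ℕ :=
  (w.filterMap (fun s => match s with | PSym.p a => some a | PSym.s _ => none)).dedup.length

/-- For `w` starting with a p-symbol: the rank of `w[1]` among the distinct
p-symbols of `w[1..h+1]`, where `h+1 = min{|w|, second occurrence of w[1] in w}`. -/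
def fceRank (w : List PSym) : ℕ :=
  match w with
  | [] => 0
  | c :: rest => distinctP ((c :: rest).take (min (c :: rest).length (2 + rest.idxOf c)))

/-- The function fce from the paper; `fce ε = $` is modelled as `Enc.s 0`. -/
def fce (w : List PSym) : Enc :=
  match w with
  | [] => Enc.s 0
  | PSym.s a :: _ => Enc.s a
  | w => Enc.fin (fceRank w)


lemma max?_map_succ (l : List ℕ) : (l.map Nat.succ).max? = l.max?.map Nat.succ := by
  induction l with
  | nil => rfl
  | cons a l ih =>
    simp only [List.map_cons, List.max?_cons, ih]
    cases l.max? <;> simp [Nat.succ_max_succ]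

lemma prevOcc_cons (c : PSym) (w : List PSym) (i : ℕ) :
    prevOcc (c :: w) (i + 1) =
      if w[i]? = some c then some ((prevOcc w i).elim 0 Nat.succ)
      else (prevOcc w i).map Nat.succ := by
  have hfil : ((List.range i).map Nat.succ).filter
      (fun j => decide ((c :: w)[j]? = w[i]?)) =
      ((List.range i).filter (fun j => decide (w[j]? = w[i]?))).map Nat.succ := by
    rw [List.filter_map]
    congr 1
  rw [prevOcc, List.range_succ_eq_map, List.filter_cons]
  simp only [List.getElem?_cons_succ, List.getElem?_cons_zero]
  unfold prevOcc
  by_cases hc : w[i]? = some c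
  · rw [if_pos (by simp [hc]), hfil, List.max?_cons, max?_map_succ, if_pos hc]
    cases ((List.range i).filter (fun j => decide (w[j]? = w[i]?))).max? <;>
      simp [Nat.max_eq_right (Nat.zero_le _)]
  · rw [if_neg (by simp; intro h; exact hc h.symm), hfil, max?_map_succ, if_neg hc]

lemma pencSym_cons_of_ne (a : ℕ) (w : List PSym) (i : ℕ)
    (h : w[i]? ≠ some (PSym.p a)) :
    pencSym (PSym.p a :: w) (i + 1) = pencSym w i := by
  have hp := prevOcc_cons (PSym.p a) w i
  rw [if_neg h] at hp
  unfold pencSym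
  rw [List.getElem?_cons_succ, hp]
  cases hw : w[i]? with
  | none => rfl
  | some x =>
    cases x with
    | s b => rfl
    | p b =>
      cases ho : prevOcc w i with
      | none => rfl
      | some j => simp [Nat.succ_sub_succ]

lemma pencSym_cons_of_prev (a : ℕ) (w : List PSym) (i j : ℕ)
    (h : w[i]? = some (PSym.p a)) (ho : prevOcc w i = some j) :
    pencSym (PSym.p a :: w) (i + 1) = pencSym w i := by
  have hp := prevOcc_cons (PSym.p a) w i
  rw [if_pos h, ho] at hp
  unfold pencSym
  rw [List.getElem?_cons_succ, hp, h, ho]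
  simp [Nat.succ_sub_succ]

lemma pencSym_cons_of_first (a : ℕ) (w : List PSym) (i : ℕ)
    (h : w[i]? = some (PSym.p a)) (ho : prevOcc w i = none) :
    pencSym (PSym.p a :: w) (i + 1) = Enc.fin (i + 1) ∧ pencSym w i = Enc.inf := by
  have hp := prevOcc_cons (PSym.p a) w i
  rw [if_pos h, ho] at hp
  constructor
  · unfold pencSym
    rw [List.getElem?_cons_succ, hp, h]
    simp
  · unfold pencSym
    rw [h, ho]

lemma getElem_ne_of_lt_indexOf {α} [DecidableEq α] (l : List α) (x : α) (j : ℕ)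
    (h : j < l.idxOf x) (hj : j < l.length) : l[j] ≠ x := by
  intro he
  have := List.not_of_lt_findIdx (p := (· == x)) (xs := l) (i := j)
    (by simpa [List.idxOf] using h)
  simp [he] at this

lemma mem_of_getElem?' {α} {l : List α} {i : ℕ} {x : α} (h : l[i]? = some x) : x ∈ l := by
  rcases List.getElem?_eq_some_iff.1 h with ⟨hi, he⟩
  exact he ▸ List.getElem_mem hi

lemma lt_of_getElem?_eq_some {α} {l : List α} {i : ℕ} {x : α} (h : l[i]? = some x) :
    i < l.length := (List.getElem?_eq_some_iff.1 h).1

lemma prevOcc_indexOf (w : List PSym) (a : ℕ) (hm : PSym.p a ∈ w) :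
    prevOcc w (w.idxOf (PSym.p a)) = none := by
  have hl : w.idxOf (PSym.p a) < w.length := List.idxOf_lt_length_iff.2 hm
  rw [prevOcc, List.max?_eq_none_iff, List.filter_eq_nil_iff]
  intro j hj
  have hj' : j < w.idxOf (PSym.p a) := List.mem_range.1 hj
  have hjl : j < w.length := lt_trans hj' hl
  have hwh : w[w.idxOf (PSym.p a)]? = some (PSym.p a) := by
    rw [List.getElem?_eq_getElem hl, List.getElem_idxOf]
  simp only [hwh, decide_eq_true_eq, List.getElem?_eq_getElem hjl]
  intro he
  exact getElem_ne_of_lt_indexOf w (PSym.p a) j hj' hjl (Option.some.inj he)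

lemma indexOf_getElem? (w : List PSym) (a : ℕ) (hm : PSym.p a ∈ w) :
    w[w.idxOf (PSym.p a)]? = some (PSym.p a) := by
  have hl : w.idxOf (PSym.p a) < w.length := List.idxOf_lt_length_iff.2 hm
  rw [List.getElem?_eq_getElem hl, List.getElem_idxOf]

lemma prevOcc_exists (w : List PSym) (a : ℕ) (i : ℕ)
    (hi : w[i]? = some (PSym.p a)) (hne : i ≠ w.idxOf (PSym.p a)) :
    ∃ j, prevOcc w i = some j := by
  have hil : i < w.length := lt_of_getElem?_eq_some hi
  have hm : PSym.p a ∈ w := mem_of_getElem?' hi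
  have hlt : w.idxOf (PSym.p a) < i := by
    rcases Nat.lt_trichotomy i (w.idxOf (PSym.p a)) with h | h | h
    · exact absurd (Option.some.inj ((List.getElem?_eq_getElem hil).symm.trans hi))
        (getElem_ne_of_lt_indexOf w (PSym.p a) i h hil)
    · exact absurd h hne
    · exact h
  have hmem : w.idxOf (PSym.p a) ∈
      (List.range i).filter (fun j => decide (w[j]? = w[i]?)) := by
    rw [List.mem_filter, List.mem_range]
    exact ⟨hlt, by simp [indexOf_getElem? w a hm, hi]⟩
  cases ho : prevOcc w i with
  | some j => exact ⟨j, rfl⟩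
  | none =>
    rw [prevOcc, List.max?_eq_none_iff] at ho
    rw [ho] at hmem
    exact absurd hmem List.not_mem_nil

lemma penc_length (w : List PSym) : (penc w).length = w.length := by simp [penc]

lemma penc_getElem? (w : List PSym) (i : ℕ) (hi : i < w.length) :
    (penc w)[i]? = some (pencSym w i) := by
  rw [penc, List.getElem?_map, List.getElem?_range hi, Option.map_some]

lemma drop_getElem? (c : PSym) (w : List PSym) (i : ℕ) (hi : i < w.length) :
    ((penc (c :: w)).drop 1)[i]? = some (pencSym (c :: w) (i + 1)) := by
  rw [List.getElem?_drop, Nat.add_comm 1 i,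
    penc_getElem? (c :: w) (i + 1) (by simpa using Nat.succ_lt_succ hi)]

/-- ⟨w⟩ and ⟨cw⟩[2..] differ iff the p-symbol `c` occurs in `w`; when it does,
they agree everywhere except at the leftmost occurrence `h` of `c` in `w`
(0-based index `h₀ = h − 1`), where ⟨w⟩[h] = ∞ and ⟨cw⟩[h+1] = h. -/
theorem stmt1 (w : List PSym) (a : ℕ) :
    (penc w ≠ (penc (PSym.p a :: w)).drop 1 ↔ PSym.p a ∈ w) ∧
    (PSym.p a ∈ w →
      (∀ i, i ≠ w.idxOf (PSym.p a) →
        (penc w)[i]? = ((penc (PSym.p a :: w)).drop 1)[i]?) ∧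
      (penc w)[w.idxOf (PSym.p a)]? = some Enc.inf ∧
      ((penc (PSym.p a :: w)).drop 1)[w.idxOf (PSym.p a)]? =
        some (Enc.fin (w.idxOf (PSym.p a) + 1))) := by
  have hlen2 : ((penc (PSym.p a :: w)).drop 1).length = w.length := by
    simp [penc_length]
  have hboth : ∀ i, w.length ≤ i →
      (penc w)[i]? = none ∧ ((penc (PSym.p a :: w)).drop 1)[i]? = none :=
    fun i hi => ⟨List.getElem?_eq_none (by rw [penc_length]; exact hi),
                 List.getElem?_eq_none (by rw [hlen2]; exact hi)⟩
  have hpart2 : PSym.p a ∈ w →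
      (∀ i, i ≠ w.idxOf (PSym.p a) →
        (penc w)[i]? = ((penc (PSym.p a :: w)).drop 1)[i]?) ∧
      (penc w)[w.idxOf (PSym.p a)]? = some Enc.inf ∧
      ((penc (PSym.p a :: w)).drop 1)[w.idxOf (PSym.p a)]? =
        some (Enc.fin (w.idxOf (PSym.p a) + 1)) := by
    intro hm
    have hl : w.idxOf (PSym.p a) < w.length := List.idxOf_lt_length_iff.2 hm
    have hwh := indexOf_getElem? w a hm
    have ho := prevOcc_indexOf w a hm
    have hfirst := pencSym_cons_of_first a w _ hwh ho
    refine ⟨?_, ?_, ?_⟩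
    · intro i hne
      by_cases hi : i < w.length
      · rw [penc_getElem? w i hi, drop_getElem? _ w i hi]
        congr 1
        by_cases hc : w[i]? = some (PSym.p a)
        · rcases prevOcc_exists w a i hc hne with ⟨j, hj⟩
          exact (pencSym_cons_of_prev a w i j hc hj).symm
        · exact (pencSym_cons_of_ne a w i hc).symm
      · rcases hboth i (le_of_not_gt hi) with ⟨h1, h2⟩
        rw [h1, h2]
    · rw [penc_getElem? w _ hl, hfirst.2]
    · rw [drop_getElem? _ w _ hl, hfirst.1]
  refine ⟨⟨?_, ?_⟩, hpart2⟩
  · intro hne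
    by_contra hnm
    apply hne
    apply List.ext_getElem?
    intro i
    by_cases hi : i < w.length
    · rw [penc_getElem? w i hi, drop_getElem? _ w i hi]
      congr 1
      refine (pencSym_cons_of_ne a w i ?_).symm
      intro hc
      exact hnm (mem_of_getElem?' hc)
    · rcases hboth i (le_of_not_gt hi) with ⟨h1, h2⟩
      rw [h1, h2]
  · intro hm heq
    rcases hpart2 hm with ⟨_, h2, h3⟩
    rw [heq, h3] at h2
    simp at h2
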